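/- Let T be a standard Young tableau of shape (n,n,n) with rows R₁, R₂, R₃, left-arc matching L and right-arc matching R. If (i, i+1) ∈ τ(T) with i in the top row and i+1 in the bottom row (i.e., i ∈ R₁ and i+1 ∈ R₃), then the unique j ∈ R₂ with L(j) = i satisfies j > i+1, and R(i+1) < i; consequently the left arc (i, j) and the right arc (R(i+1), i+1) cross, since R(i+1) < i < i+1 < j. -/

import Mathlib

/-!
STATEMENT 16: Let `T` be a standard Young tableau of shape `(n,n,n)` with rows
`R₁, R₂, R₃`, left-arc matching `L` and right-arc matching `R`.  If `(i, i+1) ∈ τ(T)`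
with `i` in the top row and `i+1` in the bottom row (i.e. `i ∈ R₁` and `i+1 ∈ R₃`),
then the unique `j ∈ R₂` with `L(j) = i` satisfies `j > i+1`, and `R(i+1) < i`;
consequently the left arc `(i, j)` and the right arc `(R(i+1), i+1)` cross, since
`R(i+1) < i < i+1 < j`.
-/

/-- `T` is a standard Young tableau of shape `(n,n,n) ⊢ 3n`: rows and columns strictly
increase and each of the values `1, …, 3n` is used exactly once.  `T r c` is the entry
in row `r`, column `c`. -/
def IsStandardNNN (n : ℕ) (T : Fin 3 → Fin n → ℕ) : Prop :=
  (∀ r : Fin 3, ∀ c c' : Fin n, c < c' → T r c < T r c') ∧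
  (∀ r r' : Fin 3, r < r' → ∀ c : Fin n, T r c < T r' c) ∧
  (∀ (r : Fin 3) (c : Fin n), T r c ∈ Finset.Icc 1 (3 * n)) ∧
  (∀ v, 1 ≤ v → v ≤ 3 * n → ∃! p : Fin 3 × Fin n, T p.1 p.2 = v)

/-- The set of entries of row `r` of `T` (`r = 0, 1, 2` giving `R₁, R₂, R₃`). -/
def rowSet (n : ℕ) (T : Fin 3 → Fin n → ℕ) (r : Fin 3) : Finset ℕ :=
  Finset.univ.image (T r)

/-- The set of elements of `A` already used as matches of the elements of `B`
smaller than `n`, processing the elements of `B` in increasing order greedily. -/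
def usedMatches (A B : Finset ℕ) : ℕ → Finset ℕ
  | 0 => ∅
  | n + 1 =>
    let U := usedMatches A B n
    if n ∈ B then U ∪ {((A \ U).filter (· < n)).sup id} else U

/-- The greedy matching rule of the m-diagram construction: processing the elements
`j` of `B` in increasing order, `greedyMatch A B j` is the largest element of `A`
smaller than `j` not already used as the match of an earlier element of `B`, i.e.
`greedyMatch A B j = max { a ∈ A : a < j and a ≠ greedyMatch A B j' for all j' ∈ B
with j' < j }`.  Applied with `A = R₁`, `B = R₂` it produces the left arcs
`(greedyMatch R₁ R₂ j, j)`; applied with `A = R₂`, `B = R₃` it produces the right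
arcs. -/
def greedyMatch (A B : Finset ℕ) (j : ℕ) : ℕ :=
  ((A \ usedMatches A B j).filter (· < j)).sup id

open Finset

lemma sup_id_mem (s : Finset ℕ) (h : s.Nonempty) : s.sup id ∈ s := by
  have := s.max'_mem h
  rwa [Finset.max'_eq_sup', Finset.sup'_eq_sup h id] at this

lemma usedMatches_mono (A B : Finset ℕ) {m m' : ℕ} (h : m ≤ m') :
    usedMatches A B m ⊆ usedMatches A B m' := by
  induction m' with
  | zero => simp [Nat.le_zero.mp h]
  | succ k ih =>
    rcases Nat.lt_or_ge m (k+1) with h' | h'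
    · refine (ih (Nat.lt_succ_iff.mp h')).trans ?_
      by_cases hk : k ∈ B <;> simp [usedMatches, hk, Finset.subset_union_left]
    · have : m = k + 1 := le_antisymm h h'
      subst this; exact subset_rfl

lemma usedMatches_card_le (A B : Finset ℕ) (m : ℕ) :
    (usedMatches A B m).card ≤ (B.filter (· < m)).card := by
  induction m with
  | zero => simp [usedMatches]
  | succ k ih =>
    by_cases hk : k ∈ B
    · have hins : B.filter (· < k + 1) = insert k (B.filter (· < k)) := by
        ext x
        simp only [mem_filter, mem_insert, Nat.lt_succ_iff_lt_or_eq]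
        constructor
        · rintro ⟨hx, h | h⟩
          · exact Or.inr ⟨hx, h⟩
          · exact Or.inl h
        · rintro (rfl | ⟨hx, h⟩)
          · exact ⟨hk, Or.inr rfl⟩
          · exact ⟨hx, Or.inl h⟩
      rw [hins, card_insert_of_notMem (by simp)]
      simp only [usedMatches, hk, if_true]
      calc (usedMatches A B k ∪ {((A \ usedMatches A B k).filter (· < k)).sup id}).card
          ≤ (usedMatches A B k).card + 1 := by
            refine (Finset.card_union_le _ _).trans ?_; simp
        _ ≤ (B.filter (· < k)).card + 1 := by omega
    · simp only [usedMatches, hk, if_false]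
      refine ih.trans (Finset.card_le_card ?_)
      intro x hx
      rw [Finset.mem_filter] at hx ⊢
      exact ⟨hx.1, by omega⟩

lemma greedyMatch_mem_used_succ (A B : Finset ℕ) {j : ℕ} (hj : j ∈ B) :
    greedyMatch A B j ∈ usedMatches A B (j + 1) := by
  simp [usedMatches, hj, greedyMatch]

lemma T_injective {n : ℕ} {T : Fin 3 → Fin n → ℕ} (hT : IsStandardNNN n T) :
    Function.Injective (fun p : Fin 3 × Fin n => T p.1 p.2) := by
  intro p q h
  obtain ⟨-, -, hrange, huniq⟩ := hT
  have hq := hrange q.1 q.2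
  rw [Finset.mem_Icc] at hq
  exact (huniq (T q.1 q.2) hq.1 hq.2).unique h rfl

lemma rowSet_disjoint {n : ℕ} {T : Fin 3 → Fin n → ℕ} (hT : IsStandardNNN n T)
    {r r' : Fin 3} (hrr : r ≠ r') {x : ℕ} (hx : x ∈ rowSet n T r)
    (hx' : x ∈ rowSet n T r') : False := by
  obtain ⟨c, -, rfl⟩ := Finset.mem_image.mp hx
  obtain ⟨c', -, hc'⟩ := Finset.mem_image.mp hx'
  have := T_injective hT (a₁ := (r', c')) (a₂ := (r, c)) hc'
  exact hrr (congrArg Prod.fst this).symm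

lemma rowSet_card {n : ℕ} {T : Fin 3 → Fin n → ℕ} (hT : IsStandardNNN n T) (r : Fin 3) :
    (rowSet n T r).card = n := by
  rw [rowSet, Finset.card_image_of_injective _ (fun c c' h => by
    have := T_injective hT (a₁ := (r, c)) (a₂ := (r, c')) h
    exact (congrArg Prod.snd this))]
  simp

lemma one_le_of_mem_rowSet {n : ℕ} {T : Fin 3 → Fin n → ℕ} (hT : IsStandardNNN n T)
    {r : Fin 3} {x : ℕ} (hx : x ∈ rowSet n T r) : 1 ≤ x := by
  obtain ⟨c, -, rfl⟩ := Finset.mem_image.mp hx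
  exact (Finset.mem_Icc.mp (hT.2.2.1 r c)).1

/-- For `j` in row 1, the greedy candidate set from row 0 is nonempty. -/
lemma candidates_nonempty {n : ℕ} {T : Fin 3 → Fin n → ℕ} (hT : IsStandardNNN n T)
    {j : ℕ} (hj : j ∈ rowSet n T 1) :
    (((rowSet n T 0) \ usedMatches (rowSet n T 0) (rowSet n T 1) j).filter (· < j)).Nonempty := by
  obtain ⟨hrow, hcol, hrange, huniq⟩ := hT
  obtain ⟨c, -, rfl⟩ := Finset.mem_image.mp hj
  set A := rowSet n T 0
  set B := rowSet n T 1
  set U := usedMatches A B (T 1 c)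
  -- |A.filter (< T 1 c)| ≥ c + 1
  have hA : (c : ℕ) + 1 ≤ (A.filter (· < T 1 c)).card := by
    have hsub : (Finset.Iic c).image (T 0) ⊆ A.filter (· < T 1 c) := by
      intro x hx
      obtain ⟨c', hc', rfl⟩ := Finset.mem_image.mp hx
      rw [Finset.mem_Iic] at hc'
      refine Finset.mem_filter.mpr ⟨Finset.mem_image.mpr ⟨c', by simp, rfl⟩, ?_⟩
      have h1 : T 0 c' < T 1 c' := hcol 0 1 (by decide) c'
      rcases lt_or_eq_of_le hc' with h | h
      · exact h1.trans (hrow 1 c' c h)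
      · subst h; exact h1
    have hcard : ((Finset.Iic c).image (T 0)).card = (c : ℕ) + 1 := by
      rw [Finset.card_image_of_injective _ (fun a b h => by
        by_contra hne
        rcases lt_or_gt_of_ne hne with h' | h'
        · exact absurd h (ne_of_lt (hrow 0 a b h'))
        · exact absurd h.symm (ne_of_lt (hrow 0 b a h'))), Fin.card_Iic]
    rw [← hcard]; exact Finset.card_le_card hsub
  -- |B.filter (< T 1 c)| = c
  have hB : (B.filter (· < T 1 c)).card = (c : ℕ) := by
    have : B.filter (· < T 1 c) = (Finset.Iio c).image (T 1) := by
      ext x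
      simp only [Finset.mem_filter, Finset.mem_image, Finset.mem_Iio]
      constructor
      · rintro ⟨hx, hlt⟩
        obtain ⟨c', -, rfl⟩ := Finset.mem_image.mp hx
        refine ⟨c', ?_, rfl⟩
        by_contra h
        push_neg at h
        rcases lt_or_eq_of_le h with h' | h'
        · exact absurd (hrow 1 c c' h') (asymm hlt)
        · subst h'; exact absurd hlt (lt_irrefl _)
      · rintro ⟨c', hc', rfl⟩
        exact ⟨Finset.mem_image.mpr ⟨c', by simp, rfl⟩, hrow 1 c' c hc'⟩
    rw [this, Finset.card_image_of_injective _ (fun a b h => by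
      by_contra hne
      rcases lt_or_gt_of_ne hne with h' | h'
      · exact absurd h (ne_of_lt (hrow 1 a b h'))
      · exact absurd h.symm (ne_of_lt (hrow 1 b a h'))), Fin.card_Iio]
  have hU : U.card ≤ (c : ℕ) := by
    have h := usedMatches_card_le A B (T 1 c)
    rw [hB] at h
    exact h
  have hsub2 : (A.filter (· < T 1 c)) \ U ⊆ (A \ U).filter (· < T 1 c) := by
    intro x hx
    rw [Finset.mem_sdiff, Finset.mem_filter] at hx
    exact Finset.mem_filter.mpr ⟨Finset.mem_sdiff.mpr ⟨hx.1.1, hx.2⟩, hx.1.2⟩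
  have : 1 ≤ ((A \ U).filter (· < T 1 c)).card := by
    have h1 : ((A.filter (· < T 1 c)) \ U).card ≤ ((A \ U).filter (· < T 1 c)).card :=
      Finset.card_le_card hsub2
    have h2 : (A.filter (· < T 1 c)).card - U.card ≤ ((A.filter (· < T 1 c)) \ U).card :=
      Finset.le_card_sdiff _ _
    omega
  exact Finset.card_pos.mp this

lemma greedy_mem {n : ℕ} {T : Fin 3 → Fin n → ℕ} (hT : IsStandardNNN n T)
    {j : ℕ} (hj : j ∈ rowSet n T 1) :
    greedyMatch (rowSet n T 0) (rowSet n T 1) j ∈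
      rowSet n T 0 \ usedMatches (rowSet n T 0) (rowSet n T 1) j ∧
    greedyMatch (rowSet n T 0) (rowSet n T 1) j < j := by
  have h := candidates_nonempty hT hj
  have := sup_id_mem _ h
  rw [Finset.mem_filter] at this
  exact ⟨this.1, this.2⟩

lemma greedy_injOn {n : ℕ} {T : Fin 3 → Fin n → ℕ} (hT : IsStandardNNN n T)
    {j j' : ℕ} (hj : j ∈ rowSet n T 1) (hj' : j' ∈ rowSet n T 1) (hne : j ≠ j')
    (heq : greedyMatch (rowSet n T 0) (rowSet n T 1) j =
           greedyMatch (rowSet n T 0) (rowSet n T 1) j') : False := by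
  wlog hlt : j < j' generalizing j j'
  · exact this hj' hj hne.symm heq.symm (by omega)
  have h1 : greedyMatch (rowSet n T 0) (rowSet n T 1) j ∈
      usedMatches (rowSet n T 0) (rowSet n T 1) j' :=
    usedMatches_mono _ _ hlt (greedyMatch_mem_used_succ _ _ hj)
  have h2 := (greedy_mem hT hj').1
  rw [Finset.mem_sdiff] at h2
  rw [heq] at h1
  exact h2.2 h1

/-- If `i ∈ R₁` and `i + 1 ∈ R₃`, then there is a unique `j ∈ R₂` with `L j = i`, every
such `j` satisfies `i + 1 < j`, and `R (i+1) < i`; hence the left arc `(i, j)` and the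
right arc `(R (i+1), i+1)` cross: `R (i+1) < i < i + 1 < j`. -/
theorem crossing_arc_of_tau_pair (n : ℕ) (T : Fin 3 → Fin n → ℕ)
    (hT : IsStandardNNN n T) (i : ℕ)
    (hi : i ∈ rowSet n T 0) (hi1 : i + 1 ∈ rowSet n T 2) :
    (∃! j, j ∈ rowSet n T 1 ∧ greedyMatch (rowSet n T 0) (rowSet n T 1) j = i) ∧
    (∀ j ∈ rowSet n T 1, greedyMatch (rowSet n T 0) (rowSet n T 1) j = i → i + 1 < j) ∧
    greedyMatch (rowSet n T 1) (rowSet n T 2) (i + 1) < i ∧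
    (∀ j ∈ rowSet n T 1, greedyMatch (rowSet n T 0) (rowSet n T 1) j = i →
      greedyMatch (rowSet n T 1) (rowSet n T 2) (i + 1) < i ∧ i < i + 1 ∧ i + 1 < j) := by
  have hi_pos : 1 ≤ i := one_le_of_mem_rowSet hT hi
  -- Existence: image of rowSet 1 under greedyMatch equals rowSet 0
  have himg : (rowSet n T 1).image (greedyMatch (rowSet n T 0) (rowSet n T 1)) =
      rowSet n T 0 := by
    apply Finset.eq_of_subset_of_card_le
    · intro x hx
      obtain ⟨j, hj, rfl⟩ := Finset.mem_image.mp hx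
      have := (greedy_mem hT hj).1
      exact (Finset.mem_sdiff.mp this).1
    · have hinj : Set.InjOn (greedyMatch (rowSet n T 0) (rowSet n T 1))
          ↑(rowSet n T 1) := by
        intro a ha b hb hab
        by_contra hne
        exact greedy_injOn hT (Finset.mem_coe.mp ha) (Finset.mem_coe.mp hb) hne hab
      rw [rowSet_card hT 0, Finset.card_image_of_injOn hinj, rowSet_card hT 1]
  have hex : ∃ j ∈ rowSet n T 1, greedyMatch (rowSet n T 0) (rowSet n T 1) j = i := by
    have : i ∈ (rowSet n T 1).image (greedyMatch (rowSet n T 0) (rowSet n T 1)) := by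
      rw [himg]; exact hi
    exact Finset.mem_image.mp this
  -- j > i + 1 for any such j
  have hgt : ∀ j ∈ rowSet n T 1, greedyMatch (rowSet n T 0) (rowSet n T 1) j = i → i + 1 < j := by
    intro j hj hji
    have hlt : i < j := by have := (greedy_mem hT hj).2; omega
    have hne : j ≠ i + 1 := fun h => rowSet_disjoint hT (show (1 : Fin 3) ≠ 2 by decide)
      (h ▸ hj) hi1
    omega
  -- R(i+1) < i
  have hR : greedyMatch (rowSet n T 1) (rowSet n T 2) (i + 1) < i := by
    set s := ((rowSet n T 1 \ usedMatches (rowSet n T 1) (rowSet n T 2) (i + 1)).filter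
      (· < i + 1)) with hs
    rcases s.eq_empty_or_nonempty with he | hne
    · have : greedyMatch (rowSet n T 1) (rowSet n T 2) (i + 1) = 0 := by
        rw [greedyMatch, ← hs, he]; simp
      omega
    · have hmem := sup_id_mem s hne
      rw [hs, Finset.mem_filter, Finset.mem_sdiff] at hmem
      have h1 : greedyMatch (rowSet n T 1) (rowSet n T 2) (i + 1) ∈ rowSet n T 1 := hmem.1.1
      have h2 : greedyMatch (rowSet n T 1) (rowSet n T 2) (i + 1) < i + 1 := hmem.2
      have hne' : greedyMatch (rowSet n T 1) (rowSet n T 2) (i + 1) ≠ i := fun h =>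
        rowSet_disjoint hT (show (1 : Fin 3) ≠ 0 by decide) (h ▸ h1) hi
      omega
  obtain ⟨j₀, hj₀, hj₀i⟩ := hex
  refine ⟨⟨j₀, ⟨hj₀, hj₀i⟩, ?_⟩, hgt, hR, fun j hj hji => ⟨hR, by omega, hgt j hj hji⟩⟩
  rintro j ⟨hj, hji⟩
  by_contra hne
  exact greedy_injOn hT hj hj₀ hne (hji.trans hj₀i.symm)
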